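/- Let F be a Horn formula over variables X_1, ..., X_n and H(F) the associated directed hypergraph. Then F entails the implication X_i ⇒ X_j if and only if vertex j is reachable from vertex i in H(F). -/

import Mathlib

/-- Reachability in a directed hypergraph whose hyperarc set is `A`. -/
inductive HReach {V : Type*} (A : Set (Set V × Set V)) : V → V → Prop
  | refl (u : V) : HReach A u u
  | step {u v : V} (T Hd : Set V) (ha : (T, Hd) ∈ A) (hv : v ∈ Hd)
      (hT : ∀ t ∈ T, HReach A u t) : HReach A u v

/-- Arcs of the directed graph `graph(H)` generated by simple hyperarcs. -/
def graphArcs {V : Type*} (A : Set (Set V × Set V)) : Set (V × V) :=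
  {p | ∃ Hd : Set V, ({p.1}, Hd) ∈ A ∧ p.2 ∈ Hd}

/-- Reachability in the directed graph `graph(H)`. -/
def GReach {V : Type*} (A : Set (Set V × Set V)) : V → V → Prop :=
  Relation.ReflTransGen (fun u v => (u, v) ∈ graphArcs A)

/-- `C` is a strongly connected component of the relation `R`. -/
def IsSCC {V : Type*} (R : V → V → Prop) (C : Set V) : Prop :=
  ∃ u : V, C = {v | R u v ∧ R v u}

/-- `C` is a terminal strongly connected component of `R`. -/
def IsTerminalSCC {V : Type*} (R : V → V → Prop) (C : Set V) : Prop :=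
  IsSCC R C ∧ ∀ u ∈ C, ∀ v, R u v → v ∈ C

/-- A Horn clause over variables `X_1, ..., X_n`. -/
inductive HornClause (n : ℕ) : Type
  | imp (T : Finset (Fin n)) (hT : T.Nonempty) (i : Fin n) : HornClause n
  | fact (i : Fin n) : HornClause n
  | goal (T : Finset (Fin n)) (hT : T.Nonempty) : HornClause n

/-- Truth value of a Horn clause under an assignment. -/
def HornClause.eval {n : ℕ} (σ : Fin n → Prop) : HornClause n → Prop
  | .imp T _ i => (∀ j ∈ T, σ j) → σ i
  | .fact i => σ i
  | .goal T _ => ∃ j ∈ T, ¬ σ j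

/-- Variable `i` occurs in a Horn clause. -/
def HornClause.occurs {n : ℕ} (i : Fin n) : HornClause n → Prop
  | .imp T _ j => i ∈ T ∨ i = j
  | .fact j => i = j
  | .goal T _ => i ∈ T

/-- The directed hypergraph `H(F)` associated to a Horn formula `F`.
Vertices: `Sum.inl i` is the variable vertex `i`, `Sum.inr true` is the
vertex `t`, `Sum.inr false` is the vertex `f`. -/
def hornArcs {n : ℕ} (F : Set (HornClause n)) :
    Set (Set (Fin n ⊕ Bool) × Set (Fin n ⊕ Bool)) :=
  {p | (∃ T hT i, HornClause.imp T hT i ∈ F ∧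
          p = (Sum.inl '' (T : Set (Fin n)), {Sum.inl i}))
    ∨ (∃ i, HornClause.fact i ∈ F ∧ p = ({Sum.inr true}, {Sum.inl i}))
    ∨ (∃ T hT, HornClause.goal T hT ∈ F ∧
          p = (Sum.inl '' (T : Set (Fin n)), {Sum.inr false}))
    ∨ p = ({Sum.inr false}, Sum.inl '' (Set.univ : Set (Fin n)))
    ∨ (∃ i : Fin n, p = ({Sum.inl i}, {Sum.inr true}))}

theorem horn_entailment_iff_reach {n : ℕ} (F : Set (HornClause n))
    (hocc : ∀ i : Fin n, ∃ c ∈ F, HornClause.occurs i c)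
    (i j : Fin n) :
    (∀ σ : Fin n → Prop, (∀ c ∈ F, HornClause.eval σ c) → (σ i → σ j)) ↔
      HReach (hornArcs F) (Sum.inl i) (Sum.inl j) := by
  classical
  constructor
  · intro hent
    by_cases hj : HReach (hornArcs F) (Sum.inl i) (Sum.inl j)
    · exact hj
    · refine hent (fun k => HReach (hornArcs F) (Sum.inl i) (Sum.inl k)) ?_
        (HReach.refl _)
      intro c hc
      cases c with
      | imp T hT k =>
        intro hTall
        refine HReach.step (Sum.inl '' (T : Set (Fin n))) {Sum.inl k}
          (Or.inl ⟨T, hT, k, hc, rfl⟩) rfl ?_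
        rintro t ⟨m, hm, rfl⟩
        exact hTall m hm
      | fact k =>
        refine HReach.step {Sum.inr true} {Sum.inl k}
          (Or.inr (Or.inl ⟨k, hc, rfl⟩)) rfl ?_
        rintro t ht
        rcases ht with rfl
        refine HReach.step {Sum.inl i} {Sum.inr true}
          (Or.inr (Or.inr (Or.inr (Or.inr ⟨i, rfl⟩)))) rfl ?_
        rintro t ht
        rcases ht with rfl
        exact HReach.refl _
      | goal T hT =>
        by_contra h
        simp only [HornClause.eval, not_exists, not_and, not_not] at h
        have hf : HReach (hornArcs F) (Sum.inl i) (Sum.inr false) := by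
          refine HReach.step (Sum.inl '' (T : Set (Fin n))) {Sum.inr false}
            (Or.inr (Or.inr (Or.inl ⟨T, hT, hc, rfl⟩))) rfl ?_
          rintro t ⟨m, hm, rfl⟩
          exact h m hm
        apply hj
        refine HReach.step {Sum.inr false} (Sum.inl '' (Set.univ : Set (Fin n)))
          (Or.inr (Or.inr (Or.inr (Or.inl rfl)))) ⟨j, trivial, rfl⟩ ?_
        rintro t ht
        rcases ht with rfl
        exact hf
  · intro hr σ hσ hi
    set P : Fin n ⊕ Bool → Prop := fun v => match v with
      | Sum.inl k => σ k
      | Sum.inr b => b = true with hP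
    have key : ∀ v, HReach (hornArcs F) (Sum.inl i) v → P v := by
      intro v hv
      induction hv with
      | refl => exact hi
      | step T Hd ha hv hT ih =>
        rcases ha with ⟨T', hT', k, hc, heq⟩ | ⟨k, hc, heq⟩ |
            ⟨T', hT', hc, heq⟩ | heq | ⟨k, heq⟩
        · obtain ⟨h1, h2⟩ := Prod.mk.injEq .. ▸ heq
          subst h1; subst h2
          rcases hv with rfl
          exact hσ _ hc (fun m hm => ih _ ⟨m, hm, rfl⟩)
        · obtain ⟨h1, h2⟩ := Prod.mk.injEq .. ▸ heq
          subst h1; subst h2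
          rcases hv with rfl
          exact hσ _ hc
        · obtain ⟨h1, h2⟩ := Prod.mk.injEq .. ▸ heq
          subst h1; subst h2
          rcases hv with rfl
          obtain ⟨m, hm, hnm⟩ := hσ _ hc
          exact absurd (ih (Sum.inl m) ⟨m, hm, rfl⟩) hnm
        · obtain ⟨h1, h2⟩ := Prod.mk.injEq .. ▸ heq
          subst h1; subst h2
          have := ih (Sum.inr false) rfl
          simp [hP] at this
        · obtain ⟨h1, h2⟩ := Prod.mk.injEq .. ▸ heq
          subst h1; subst h2
          rcases hv with rfl
          rfl
    exact key (Sum.inl j) hr
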